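/- There exists a unique rational (holomorphic) representation ρ_Jac: GL(2n,C) → GL(Z_n) such that ρ_Jac(Ǔ) = ρ(U) for all U ∈ GL(n,H), where ρ(U)(W) = UWŪᵀ and Z_n = X_n ⊗_R C. -/

import Mathlib

open Matrix Quaternion

/-- The check map `x ↦ x̌` from the quaternions to `2 × 2` complex matrices. -/
def check (x : Quaternion ℝ) : Matrix (Fin 2) (Fin 2) ℂ :=
  !![⟨x.re, x.imI⟩, ⟨x.imJ, x.imK⟩; ⟨-x.imJ, x.imK⟩, ⟨x.re, -x.imI⟩]

/-- Entrywise application of the check map to a quaternionic matrix. -/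
def checkMat {m : Type*} (A : Matrix m m (Quaternion ℝ)) :
    Matrix (m × Fin 2) (m × Fin 2) ℂ :=
  fun p q => check (A p.1 q.1) p.2 q.2

/-- `Z_n = X_n ⊗_ℝ ℂ`, the complexification of the space of quaternionic hermitian
matrices, realized as the ℂ-span of the check images of hermitian matrices. -/
noncomputable def Zn (n : ℕ) : Submodule ℂ (Matrix (Fin n × Fin 2) (Fin n × Fin 2) ℂ) :=
  Submodule.span ℂ
    {W | ∃ X : Matrix (Fin n) (Fin n) (Quaternion ℝ), Xᴴ = X ∧ W = checkMat X}

/-- A map `ρ : GL(2n,ℂ) → GL(Z_n)` is a rational (holomorphic) representation if,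
with respect to a fixed basis of `Z_n`, all matrix entries of `ρ(g)` are polynomials
in the entries of `g` divided by a power of `det g`. -/
noncomputable def IsRatRep (n : ℕ)
    (ρ : (Matrix (Fin n × Fin 2) (Fin n × Fin 2) ℂ)ˣ →* (Module.End ℂ (Zn n))ˣ) : Prop :=
  ∃ (k : ℕ) (P : Fin (Module.finrank ℂ (Zn n)) → Fin (Module.finrank ℂ (Zn n)) →
      MvPolynomial ((Fin n × Fin 2) × (Fin n × Fin 2)) ℂ),
    ∀ (g : (Matrix (Fin n × Fin 2) (Fin n × Fin 2) ℂ)ˣ) (i j),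
      LinearMap.toMatrix (Module.finBasis ℂ (Zn n)) (Module.finBasis ℂ (Zn n))
          ((ρ g : Module.End ℂ (Zn n))) i j * ((g : Matrix (Fin n × Fin 2) (Fin n × Fin 2) ℂ).det) ^ k
        = MvPolynomial.eval (fun p => (g : Matrix (Fin n × Fin 2) (Fin n × Fin 2) ℂ) p.1 p.2) (P i j)

namespace RhoJacAux

open scoped ComplexConjugate

abbrev Mat (n : ℕ) := Matrix (Fin n × Fin 2) (Fin n × Fin 2) ℂ

def J2 : Matrix (Fin 2) (Fin 2) ℂ := !![0,1;-1,0]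

def Jn (n : ℕ) : Mat n := Matrix.of fun p q => if p.1 = q.1 then J2 p.2 q.2 else 0

lemma J2_mul_J2 : J2 * J2 = -1 := by
  ext a b
  fin_cases a <;> fin_cases b <;>
    simp [J2, Matrix.mul_apply, Fin.sum_univ_two]

lemma J2_transpose : J2ᵀ = -J2 := by
  ext a b
  fin_cases a <;> fin_cases b <;> simp [J2]

lemma mul_Jn_apply {n : ℕ} (M : Mat n) (p q : Fin n × Fin 2) :
    (M * Jn n) p q = ∑ c, M p (q.1, c) * J2 c q.2 := by
  rw [Matrix.mul_apply, Fintype.sum_prod_type, Finset.sum_comm]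
  refine Finset.sum_congr rfl fun c _ => ?_
  simp [Jn, mul_ite, mul_zero, Finset.sum_ite_eq, Finset.sum_ite_eq']

lemma Jn_mul_apply {n : ℕ} (M : Mat n) (p q : Fin n × Fin 2) :
    (Jn n * M) p q = ∑ c, J2 p.2 c * M (p.1, c) q := by
  rw [Matrix.mul_apply, Fintype.sum_prod_type]
  simp [Jn, ite_mul, zero_mul, Finset.sum_ite_eq, Finset.sum_ite_eq']

lemma Jn_mul_Jn {n : ℕ} : Jn n * Jn n = -1 := by
  ext p q
  rw [mul_Jn_apply]
  have h2 : (∑ c, Jn n p (q.1, c) * J2 c q.2) = if p.1 = q.1 then (J2 * J2) p.2 q.2 else 0 := by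
    by_cases h : p.1 = q.1
    · simp [Jn, h, Matrix.mul_apply]
    · simp [Jn, h]
  rw [h2, J2_mul_J2]
  obtain ⟨i, a⟩ := p; obtain ⟨j, b⟩ := q
  by_cases h : i = j
  · subst h
    by_cases h2 : a = b
    · subst h2; simp [Matrix.one_apply]
    · simp [Matrix.one_apply, h2, Prod.ext_iff]
  · simp [Matrix.one_apply, h, Prod.ext_iff]

lemma Jn_transpose {n : ℕ} : (Jn n)ᵀ = -(Jn n) := by
  ext p q
  simp only [Matrix.transpose_apply, Jn, Matrix.of_apply, Matrix.neg_apply]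
  by_cases h : p.1 = q.1
  · rw [if_pos h.symm, if_pos h]
    have := congrFun (congrFun J2_transpose p.2) q.2
    simpa [Matrix.transpose_apply, Matrix.neg_apply] using this
  · rw [if_neg (fun hh => h hh.symm), if_neg h, neg_zero]

lemma Jn_map_conj {n : ℕ} : (Jn n).map (starRingEnd ℂ) = Jn n := by
  ext p q
  obtain ⟨i, a⟩ := p; obtain ⟨j, b⟩ := q
  simp only [Matrix.map_apply, Jn, Matrix.of_apply]
  by_cases h : i = j
  · simp only [h, if_true]
    fin_cases a <;> fin_cases b <;> simp [J2]
  · simp [h]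

lemma check_conj (x : Quaternion ℝ) : check x * J2 = J2 * (check (star x))ᵀ := by
  ext a b
  simp only [Matrix.mul_apply, Matrix.transpose_apply]
  fin_cases a <;> fin_cases b <;>
    simp [check, J2, Fin.sum_univ_two, Complex.ext_iff]

lemma checkH (x : Quaternion ℝ) : (check x)ᴴ = check (star x) := by
  ext a b
  simp only [Matrix.conjTranspose_apply]
  fin_cases a <;> fin_cases b <;>
    simp [check, Complex.ext_iff]

lemma sigma2_check (x : Quaternion ℝ) :
    -(J2 * (check x).map (starRingEnd ℂ) * J2) = check x := by
  ext a b
  simp only [Matrix.neg_apply, Matrix.mul_apply, Matrix.map_apply]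
  fin_cases a <;> fin_cases b <;>
    simp [check, J2, Fin.sum_univ_two, Complex.ext_iff]

lemma check_injective : Function.Injective check := by
  intro x y h
  have h00 := congrFun (congrFun h 0) 0
  have h01 := congrFun (congrFun h 0) 1
  simp [check, Complex.ext_iff] at h00 h01
  ext <;> tauto

def qcoord (x : Quaternion ℝ) : Fin 4 → ℝ := ![x.re, x.imI, x.imJ, x.imK]

def cc : Fin 2 → Fin 2 → Fin 4 → ℂ :=
  ![![![1, Complex.I, 0, 0], ![0, 0, 1, Complex.I]],
    ![![0, 0, -1, Complex.I], ![1, -Complex.I, 0, 0]]]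

lemma checkEntry (a b : Fin 2) (x : Quaternion ℝ) :
    check x a b = ∑ m, cc a b m * (qcoord x m : ℂ) := by
  fin_cases a <;> fin_cases b <;>
    simp [check, cc, qcoord, Fin.sum_univ_four, Complex.ext_iff]

lemma checkMat_injective {n : ℕ} : Function.Injective (checkMat (m := Fin n)) := by
  intro X Y h
  funext i j
  apply check_injective
  ext a b
  exact congrFun (congrFun h (i, a)) (j, b)

lemma mulJJ {n : ℕ} (A : Mat n) : A * Jn n * Jn n = -A := by
  rw [mul_assoc, Jn_mul_Jn, mul_neg_one]

lemma JJmul {n : ℕ} (A : Mat n) : Jn n * (Jn n * A) = -A := by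
  rw [← mul_assoc, Jn_mul_Jn, neg_one_mul]

lemma CM1 {n : ℕ} (X : Matrix (Fin n) (Fin n) (Quaternion ℝ)) :
    checkMat X * Jn n = Jn n * (checkMat Xᴴ)ᵀ := by
  ext p q
  obtain ⟨i, a⟩ := p; obtain ⟨j, b⟩ := q
  rw [mul_Jn_apply, Jn_mul_apply]
  have := congrFun (congrFun (check_conj (X i j)) a) b
  rw [Matrix.mul_apply, Matrix.mul_apply] at this
  simpa [checkMat, Matrix.conjTranspose_apply, Matrix.transpose_apply] using this

noncomputable def An (n : ℕ) : Submodule ℂ (Mat n) where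
  carrier := {M | M * Jn n = Jn n * Mᵀ}
  add_mem' := by
    intro a b ha hb
    simp only [Set.mem_setOf_eq] at *
    rw [Matrix.add_mul, Matrix.transpose_add, Matrix.mul_add, ha, hb]
  zero_mem' := by simp
  smul_mem' := by
    intro c M h
    simp only [Set.mem_setOf_eq] at *
    rw [Matrix.smul_mul, Matrix.transpose_smul, Matrix.mul_smul, h]

lemma mem_An {n : ℕ} {M : Mat n} : M ∈ An n ↔ M * Jn n = Jn n * Mᵀ := Iff.rfl

lemma flip_An {n : ℕ} {A : Mat n} (h : A * Jn n = Jn n * Aᵀ) :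
    Jn n * A = Aᵀ * Jn n := by
  have h1 : Jn n * A * Jn n = -Aᵀ := by rw [mul_assoc, h, JJmul]
  have h2 : Jn n * A * Jn n * Jn n = -Aᵀ * Jn n := by rw [h1]
  rw [mulJJ, neg_mul] at h2
  exact neg_injective h2

noncomputable def sigma {n : ℕ} (M : Mat n) : Mat n := -(Jn n * M.map (starRingEnd ℂ) * Jn n)

def blk {n : ℕ} (M : Mat n) (i j : Fin n) : Matrix (Fin 2) (Fin 2) ℂ :=
  Matrix.of fun a b => M (i, a) (j, b)

lemma sigma_apply {n : ℕ} (M : Mat n) (p q : Fin n × Fin 2) :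
    sigma M p q = (-(J2 * (blk M p.1 q.1).map (starRingEnd ℂ) * J2)) p.2 q.2 := by
  obtain ⟨i, a⟩ := p; obtain ⟨j, b⟩ := q
  simp only [sigma, Matrix.neg_apply, neg_inj]
  rw [mul_assoc, Jn_mul_apply]
  simp only [mul_Jn_apply]
  rw [Matrix.mul_apply]
  simp only [Matrix.mul_apply, Matrix.map_apply, blk, Matrix.of_apply]
  simp only [Finset.mul_sum, Finset.sum_mul]
  conv_rhs => rw [Finset.sum_comm]
  exact Finset.sum_congr rfl fun c _ => Finset.sum_congr rfl fun d _ => by ring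

lemma sigma_checkMat {n : ℕ} (X : Matrix (Fin n) (Fin n) (Quaternion ℝ)) :
    sigma (checkMat X) = checkMat X := by
  ext p q
  rw [sigma_apply]
  have hblk : blk (checkMat X) p.1 q.1 = check (X p.1 q.1) := rfl
  rw [hblk]
  exact congrFun (congrFun (sigma2_check (X p.1 q.1)) p.2) q.2

def Xof {n : ℕ} (M : Mat n) : Matrix (Fin n) (Fin n) (Quaternion ℝ) :=
  Matrix.of fun i j =>
    ⟨(M (i, 0) (j, 0)).re, (M (i, 0) (j, 0)).im, (M (i, 0) (j, 1)).re, (M (i, 0) (j, 1)).im⟩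

lemma check_of_fixed (B : Matrix (Fin 2) (Fin 2) ℂ)
    (h : -(J2 * B.map (starRingEnd ℂ) * J2) = B) :
    check ⟨(B 0 0).re, (B 0 0).im, (B 0 1).re, (B 0 1).im⟩ = B := by
  have h10 := congrFun (congrFun h 1) 0
  have h11 := congrFun (congrFun h 1) 1
  simp only [Matrix.neg_apply, Matrix.mul_apply, Matrix.map_apply, Fin.sum_univ_two] at h10 h11
  simp [J2, Complex.ext_iff] at h10 h11
  ext a b
  fin_cases a <;> fin_cases b <;>
    simp [check, Complex.ext_iff] <;>
    constructor <;> linarith [h10.1, h10.2, h11.1, h11.2]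

lemma checkMat_Xof {n : ℕ} {M : Mat n} (h : sigma M = M) : checkMat (Xof M) = M := by
  ext p q
  obtain ⟨i, a⟩ := p; obtain ⟨j, b⟩ := q
  have hb : -(J2 * (blk M i j).map (starRingEnd ℂ) * J2) = blk M i j := by
    ext a' b'
    have := congrFun (congrFun h (i, a')) (j, b')
    rw [sigma_apply] at this
    exact this
  have := check_of_fixed (blk M i j) hb
  have h2 : checkMat (Xof M) (i, a) (j, b) = check ⟨((blk M i j) 0 0).re, ((blk M i j) 0 0).im,
      ((blk M i j) 0 1).re, ((blk M i j) 0 1).im⟩ a b := rfl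
  rw [h2, this]
  rfl

lemma map_conj_conj {n : ℕ} (M : Mat n) :
    (M.map (starRingEnd ℂ)).map (starRingEnd ℂ) = M := by
  ext p q; simp

lemma sigma_add {n : ℕ} (M N : Mat n) : sigma (M + N) = sigma M + sigma N := by
  simp only [sigma]
  rw [Matrix.map_add (starRingEnd ℂ) (by simp), Matrix.mul_add, Matrix.add_mul, neg_add]

lemma map_conj_neg {n : ℕ} (A : Mat n) :
    (-A).map (starRingEnd ℂ) = -(A.map (starRingEnd ℂ)) := by
  ext p q; simp [Matrix.map_apply]

lemma sigma_neg {n : ℕ} (M : Mat n) : sigma (-M) = -(sigma M) := by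
  simp only [sigma, map_conj_neg, Matrix.mul_neg, Matrix.neg_mul, neg_neg]

lemma sigma_sub {n : ℕ} (M N : Mat n) : sigma (M - N) = sigma M - sigma N := by
  rw [sub_eq_add_neg, sub_eq_add_neg, sigma_add, sigma_neg]

lemma sigma_smul {n : ℕ} (c : ℂ) (M : Mat n) :
    sigma (c • M) = (starRingEnd ℂ c) • sigma M := by
  simp only [sigma]
  have : (c • M).map (starRingEnd ℂ) = (starRingEnd ℂ c) • M.map (starRingEnd ℂ) := by
    ext p q; simp
  rw [this, Matrix.mul_smul, Matrix.smul_mul, smul_neg]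

lemma sigma_sigma {n : ℕ} (M : Mat n) : sigma (sigma M) = M := by
  simp only [sigma]
  have h1 : (-(Jn n * M.map (starRingEnd ℂ) * Jn n)).map (starRingEnd ℂ)
      = -(Jn n * M * Jn n) := by
    rw [map_conj_neg, Matrix.map_mul, Matrix.map_mul, Jn_map_conj, map_conj_conj]
  rw [h1]
  rw [Matrix.mul_neg, Matrix.neg_mul, neg_neg]
  calc Jn n * (Jn n * M * Jn n) * Jn n
      = (Jn n * (Jn n * M)) * (Jn n * Jn n) := by noncomm_ring
    _ = M := by rw [JJmul, Jn_mul_Jn, Matrix.neg_mul, mul_neg_one, neg_neg]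

lemma sigma_mem_An {n : ℕ} {M : Mat n} (h : M ∈ An n) : sigma M ∈ An n := by
  rw [mem_An] at h ⊢
  set M' := M.map (starRingEnd ℂ) with hM'
  have h' : M' * Jn n = Jn n * M'ᵀ := by
    have := congrArg (fun A => A.map (starRingEnd ℂ)) h
    simpa [Matrix.map_mul, Jn_map_conj, Matrix.transpose_map, hM'] using this
  have hL : sigma M * Jn n = Jn n * M' := by
    show -(Jn n * M' * Jn n) * Jn n = _
    rw [Matrix.neg_mul, mulJJ, neg_neg]
  have hT : (sigma M)ᵀ = -(Jn n * M'ᵀ * Jn n) := by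
    show (-(Jn n * M' * Jn n))ᵀ = _
    rw [Matrix.transpose_neg, Matrix.transpose_mul, Matrix.transpose_mul, Jn_transpose]
    noncomm_ring
  rw [hL, hT]
  have h2 : Jn n * -(Jn n * M'ᵀ * Jn n) = M'ᵀ * Jn n := by
    rw [Matrix.mul_neg, show Jn n * M'ᵀ * Jn n = Jn n * (M'ᵀ * Jn n) from mul_assoc _ _ _,
      JJmul, neg_neg]
  rw [h2]
  exact flip_An h'

lemma hermitian_of_mem_An {n : ℕ} {Y : Matrix (Fin n) (Fin n) (Quaternion ℝ)}
    (h : checkMat Y ∈ An n) : Yᴴ = Y := by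
  rw [mem_An, CM1] at h
  have h2 := congrArg (fun A => Jn n * A) h
  simp only [JJmul] at h2
  have h3 := neg_injective h2
  exact checkMat_injective (Matrix.transpose_inj.mp h3)

lemma mem_Zn_of_sigma_fixed {n : ℕ} {M : Mat n} (h1 : sigma M = M) (h2 : M ∈ An n) :
    M ∈ Zn n := by
  have hX : checkMat (Xof M) = M := checkMat_Xof h1
  apply Submodule.subset_span
  exact ⟨Xof M, hermitian_of_mem_An (hX.symm ▸ h2), hX.symm⟩

lemma Zn_eq_An (n : ℕ) : Zn n = An n := by
  apply le_antisymm
  · rw [Zn]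
    apply Submodule.span_le.mpr
    rintro W ⟨X, hX, rfl⟩
    show checkMat X ∈ An n
    rw [mem_An, CM1, hX]
  · intro M hM
    have hσ : sigma M ∈ An n := sigma_mem_An hM
    set P := ((1:ℂ)/2) • (M + sigma M) with hP
    set Q := (-Complex.I/2) • (M - sigma M) with hQ
    have hPA : P ∈ An n := Submodule.smul_mem _ _ (Submodule.add_mem _ hM hσ)
    have hQA : Q ∈ An n := Submodule.smul_mem _ _ (Submodule.sub_mem _ hM hσ)
    have hPσ : sigma P = P := by
      rw [hP, sigma_smul, sigma_add, sigma_sigma, add_comm]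
      norm_num [Complex.conj_ofNat]
    have hQσ : sigma Q = Q := by
      rw [hQ, sigma_smul, sigma_sub, sigma_sigma]
      have hc : (starRingEnd ℂ) (-Complex.I/2) = Complex.I/2 := by
        simp [Complex.conj_I, Complex.conj_ofNat]
      rw [hc, ← neg_sub M (sigma M), smul_neg, ← neg_smul, neg_div]
    have hPZ := mem_Zn_of_sigma_fixed hPσ hPA
    have hQZ := mem_Zn_of_sigma_fixed hQσ hQA
    have hM' : M = P + Complex.I • Q := by
      rw [hP, hQ, smul_smul]
      have hI : Complex.I * (-Complex.I/2) = 1/2 := by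
        linear_combination (-1/2 : ℂ) * Complex.I_mul_I
      rw [hI]
      module
    rw [hM']
    exact Submodule.add_mem _ hPZ (Submodule.smul_mem _ _ hQZ)

lemma JAJ_apply {n : ℕ} (A : Mat n) (p q : Fin n × Fin 2) :
    (Jn n * A * Jn n) p q = (J2 * blk A p.1 q.1 * J2) p.2 q.2 := by
  obtain ⟨i, a⟩ := p; obtain ⟨j, b⟩ := q
  rw [mul_assoc, Jn_mul_apply]
  simp only [mul_Jn_apply]
  rw [Matrix.mul_apply]
  simp only [Matrix.mul_apply, blk, Matrix.of_apply]
  simp only [Finset.mul_sum, Finset.sum_mul]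
  conv_rhs => rw [Finset.sum_comm]
  exact Finset.sum_congr rfl fun c _ => Finset.sum_congr rfl fun d _ => by ring

lemma mulJJ2 (A : Matrix (Fin 2) (Fin 2) ℂ) : A * J2 * J2 = -A := by
  rw [mul_assoc, J2_mul_J2, mul_neg_one]

lemma CM3two (y : Quaternion ℝ) : -(J2 * (check y)ᵀ * J2) = (check y)ᴴ := by
  have h := check_conj (star y)
  rw [star_star] at h
  have h2 : check (star y) * J2 * J2 = J2 * (check y)ᵀ * J2 := by rw [h]
  rw [mulJJ2] at h2
  rw [← h2, neg_neg, checkH]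

lemma CM3 {n : ℕ} (U : Matrix (Fin n) (Fin n) (Quaternion ℝ)) :
    -(Jn n * (checkMat U)ᵀ * Jn n) = (checkMat U)ᴴ := by
  ext p q
  rw [Matrix.neg_apply, JAJ_apply]
  have hblk : blk (checkMat U)ᵀ p.1 q.1 = (check (U q.1 p.1))ᵀ := by
    ext a b; rfl
  rw [hblk]
  have := congrFun (congrFun (CM3two (U q.1 p.1)) p.2) q.2
  simp only [Matrix.neg_apply] at this
  exact this

noncomputable def F0 {n : ℕ} (g : Mat n) : Mat n →ₗ[ℂ] Mat n where
  toFun M := -(g * M * Jn n * gᵀ * Jn n)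
  map_add' M N := by
    simp only [Matrix.mul_add, Matrix.add_mul, neg_add]
  map_smul' c M := by
    simp only [Matrix.mul_smul, Matrix.smul_mul, smul_neg, RingHom.id_apply]

lemma F0_apply {n : ℕ} (g M : Mat n) : F0 g M = -(g * M * Jn n * gᵀ * Jn n) := rfl

lemma F0_mem_An {n : ℕ} (g : Mat n) {M : Mat n} (h : M ∈ An n) : F0 g M ∈ An n := by
  rw [mem_An] at h ⊢
  rw [F0_apply]
  have e1 : (-(g * M * Jn n * gᵀ * Jn n)) * Jn n = g * M * Jn n * gᵀ := by
    rw [Matrix.neg_mul, mulJJ, neg_neg]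
  have e2 : (-(g * M * Jn n * gᵀ * Jn n))ᵀ = -(Jn n * g * Jn n * Mᵀ * gᵀ) := by
    simp only [Matrix.transpose_neg, Matrix.transpose_mul, Matrix.transpose_transpose,
      Jn_transpose]
    noncomm_ring
  rw [e1, e2]
  have e3 : Jn n * -(Jn n * g * Jn n * Mᵀ * gᵀ) = g * Jn n * Mᵀ * gᵀ := by
    rw [Matrix.mul_neg,
      show Jn n * g * Jn n * Mᵀ * gᵀ = Jn n * (g * Jn n * Mᵀ * gᵀ) from by noncomm_ring,
      JJmul, neg_neg]
  rw [e3, show g * M * Jn n * gᵀ = g * (M * Jn n) * gᵀ from by noncomm_ring, h]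
  noncomm_ring

lemma F0_mem_Zn {n : ℕ} (g : Mat n) {M : Mat n} (h : M ∈ Zn n) : F0 g M ∈ Zn n := by
  rw [Zn_eq_An] at h ⊢
  exact F0_mem_An g h

noncomputable def F (n : ℕ) : Mat n →* Module.End ℂ (Zn n) where
  toFun g := (F0 g).restrict (fun M hM => F0_mem_Zn g hM)
  map_one' := by
    apply LinearMap.ext
    intro w
    apply Subtype.ext
    rw [LinearMap.restrict_apply]
    show -((1 : Mat n) * ↑w * Jn n * (1 : Mat n)ᵀ * Jn n) = (w : Mat n)
    rw [Matrix.transpose_one, Matrix.one_mul, Matrix.mul_one, mulJJ, neg_neg]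
  map_mul' g h := by
    apply LinearMap.ext
    intro w
    apply Subtype.ext
    show F0 (g * h) (w : Mat n) = F0 g (F0 h (w : Mat n))
    rw [F0_apply, F0_apply, F0_apply]
    rw [Matrix.transpose_mul]
    have e : g * -(h * ↑w * Jn n * hᵀ * Jn n) * Jn n * gᵀ * Jn n
        = -(g * (h * ↑w * Jn n * hᵀ) * (Jn n * Jn n) * gᵀ * Jn n) := by noncomm_ring
    rw [e, Jn_mul_Jn]
    noncomm_ring

noncomputable def rho (n : ℕ) : (Mat n)ˣ →* (Module.End ℂ (Zn n))ˣ := Units.map (F n)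

lemma rho_checkMat {n : ℕ} (U : Matrix (Fin n) (Fin n) (Quaternion ℝ))
    (hU : IsUnit (checkMat U)) (w : Zn n) :
    ((rho n hU.unit : Module.End ℂ (Zn n)) w : Mat n)
      = checkMat U * (w : Mat n) * (checkMat U)ᴴ := by
  have h1 : ((rho n hU.unit : Module.End ℂ (Zn n)) w : Mat n)
      = F0 (hU.unit : Mat n) (w : Mat n) := rfl
  rw [h1, hU.unit_spec, F0_apply, ← CM3]
  noncomm_ring

noncomputable def Psi {n : ℕ} (C : Mat n) : Mat n →ₗ[ℂ] Mat n →ₗ[ℂ] Mat n :=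
  LinearMap.mk₂ ℂ (fun A B => -(A * C * Jn n * Bᵀ * Jn n))
    (fun A A' B => by simp only [Matrix.add_mul, neg_add])
    (fun c A B => by simp only [Matrix.smul_mul, smul_neg])
    (fun A B B' => by
      simp only [Matrix.transpose_add, Matrix.mul_add, Matrix.add_mul, neg_add])
    (fun c A B => by
      simp only [Matrix.transpose_smul, Matrix.mul_smul, Matrix.smul_mul, smul_neg])

lemma F0_eq_Psi {n : ℕ} (g C : Mat n) : F0 g C = Psi C g g := rfl

lemma matrix_decomp {n : ℕ} (g : Mat n) :
    g = ∑ p, ∑ q, g p q • Matrix.single p q 1 := by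
  conv_lhs => rw [matrix_eq_sum_single g]
  refine Finset.sum_congr rfl fun p _ => Finset.sum_congr rfl fun q _ => ?_
  rw [Matrix.smul_single, smul_eq_mul, mul_one]

lemma bilin_expand {n : ℕ} (ψ : Mat n →ₗ[ℂ] Mat n →ₗ[ℂ] ℂ) (g : Mat n) :
    ψ g g = ∑ p, ∑ q, ∑ r, ∑ s,
      g r s * g p q * ψ (Matrix.single r s 1) (Matrix.single p q 1) := by
  conv_lhs => rw [matrix_decomp g]
  simp only [map_sum, LinearMap.sum_apply, LinearMap.map_smul, LinearMap.smul_apply,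
    Finset.smul_sum, smul_eq_mul]
  refine Finset.sum_congr rfl fun p _ => Finset.sum_congr rfl fun q _ => ?_
  refine Finset.sum_congr rfl fun r _ => Finset.sum_congr rfl fun s _ => ?_
  ring

noncomputable def IsRatRep' (n : ℕ)
    (ρ : (Mat n)ˣ →* (Module.End ℂ (Zn n))ˣ) : Prop :=
  ∃ (k : ℕ) (P : Fin (Module.finrank ℂ (Zn n)) → Fin (Module.finrank ℂ (Zn n)) →
      MvPolynomial ((Fin n × Fin 2) × (Fin n × Fin 2)) ℂ),
    ∀ (g : (Mat n)ˣ) (i j),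
      LinearMap.toMatrix (Module.finBasis ℂ (Zn n)) (Module.finBasis ℂ (Zn n))
          ((ρ g : Module.End ℂ (Zn n))) i j * ((g : Mat n).det) ^ k
        = MvPolynomial.eval (fun p => (g : Mat n) p.1 p.2) (P i j)

lemma isRatRep_rho (n : ℕ) : IsRatRep' n (rho n) := by
  classical
  obtain ⟨π, hπ⟩ := (Zn n).subtype.exists_leftInverse_of_injective (Submodule.ker_subtype _)
  have hid : ∀ v : Zn n, π ↑v = v := fun v => LinearMap.ext_iff.mp hπ v
  set B := Module.finBasis ℂ (Zn n) with hB
  refine ⟨0, fun i j =>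
    ∑ p, ∑ q, ∑ r, ∑ s,
      MvPolynomial.C
          (((Psi ((B j : Zn n) : Mat n)).compr₂ ((B.coord i).comp π))
            (Matrix.single r s 1) (Matrix.single p q 1))
        * MvPolynomial.X (r, s) * MvPolynomial.X (p, q), ?_⟩
  intro g i j
  rw [pow_zero, mul_one, LinearMap.toMatrix_apply]
  have hval : ((rho n g : Module.End ℂ (Zn n)) (B j)) = π (F0 (g : Mat n) ((B j : Zn n) : Mat n)) := by
    have hres : (((rho n g : Module.End ℂ (Zn n)) (B j) : Zn n) : Mat n)
        = F0 (g : Mat n) ((B j : Zn n) : Mat n) := rfl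
    rw [← hres, hid]
  rw [hval]
  have hL : B.repr (π (F0 (g : Mat n) ((B j : Zn n) : Mat n))) i
      = ((Psi ((B j : Zn n) : Mat n)).compr₂ ((B.coord i).comp π)) (g : Mat n) (g : Mat n) := rfl
  rw [hL, bilin_expand]
  simp only [map_sum, _root_.map_mul (MvPolynomial.eval _), MvPolynomial.eval_C,
    MvPolynomial.eval_X]
  refine Finset.sum_congr rfl fun p _ => Finset.sum_congr rfl fun q _ => ?_
  refine Finset.sum_congr rfl fun r _ => Finset.sum_congr rfl fun s _ => ?_
  ring

lemma realVanish {σ : Type*} {S : MvPolynomial σ ℂ}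
    (h : ∀ t : σ → ℝ, MvPolynomial.eval (fun i => (t i : ℂ)) S = 0) : S = 0 := by
  classical
  set A : MvPolynomial σ ℝ :=
    ∑ m ∈ S.support, MvPolynomial.monomial m (S.coeff m).re with hA
  set Bp : MvPolynomial σ ℝ :=
    ∑ m ∈ S.support, MvPolynomial.monomial m (S.coeff m).im with hBp
  have hre : ∀ t : σ → ℝ,
      MvPolynomial.eval t A = (MvPolynomial.eval (fun i => (t i : ℂ)) S).re ∧
      MvPolynomial.eval t Bp = (MvPolynomial.eval (fun i => (t i : ℂ)) S).im := by
    intro t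
    rw [MvPolynomial.eval_eq (fun i => (t i : ℂ)) S, hA, hBp, map_sum, map_sum]
    rw [Complex.re_sum, Complex.im_sum]
    constructor <;>
    · refine Finset.sum_congr rfl fun m _ => ?_
      rw [MvPolynomial.eval_monomial]
      simp only [Finsupp.prod, ← Complex.ofReal_pow, ← Complex.ofReal_prod, Complex.mul_re,
        Complex.mul_im, Complex.ofReal_re, Complex.ofReal_im, mul_zero, sub_zero, zero_add]
  have hA0 : A = 0 := by
    apply MvPolynomial.funext
    intro x
    rw [(hre x).1, h x]
    simp
  have hB0 : Bp = 0 := by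
    apply MvPolynomial.funext
    intro x
    rw [(hre x).2, h x]
    simp
  ext m
  by_cases hm : m ∈ S.support
  · have hAc : MvPolynomial.coeff m A = (S.coeff m).re := by
      rw [hA, MvPolynomial.coeff_sum]
      simp only [MvPolynomial.coeff_monomial]
      rw [Finset.sum_ite_eq' S.support m fun m' => (S.coeff m').re, if_pos hm]
    have hBc : MvPolynomial.coeff m Bp = (S.coeff m).im := by
      rw [hBp, MvPolynomial.coeff_sum]
      simp only [MvPolynomial.coeff_monomial]
      rw [Finset.sum_ite_eq' S.support m fun m' => (S.coeff m').im, if_pos hm]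
    rw [hA0] at hAc
    rw [hB0] at hBc
    simp only [MvPolynomial.coeff_zero] at hAc hBc
    rw [MvPolynomial.coeff_zero]
    exact Complex.ext hAc.symm hBc.symm
  · simpa using MvPolynomial.notMem_support_iff.mp hm

abbrev QIdx (n : ℕ) := (Fin n × Fin n) × Fin 4

noncomputable def Lc {n : ℕ} (e : (Fin n × Fin 2) × (Fin n × Fin 2)) (α : QIdx n) : ℂ :=
  if e.1.1 = α.1.1 ∧ e.2.1 = α.1.2 then cc e.1.2 e.2.2 α.2 else 0

def qc {n : ℕ} (U : Matrix (Fin n) (Fin n) (Quaternion ℝ)) (α : QIdx n) : ℝ :=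
  qcoord (U α.1.1 α.1.2) α.2

lemma checkMat_coords {n : ℕ} (U : Matrix (Fin n) (Fin n) (Quaternion ℝ))
    (e : (Fin n × Fin 2) × (Fin n × Fin 2)) :
    checkMat U e.1 e.2 = ∑ α, Lc e α * (qc U α : ℂ) := by
  obtain ⟨⟨i, a⟩, ⟨j, b⟩⟩ := e
  rw [Fintype.sum_prod_type]
  have step : ∀ ij' : Fin n × Fin n,
      (∑ m, Lc ((i,a),(j,b)) (ij', m) * (qc U (ij', m) : ℂ))
        = if (i, j) = ij' then ∑ m, cc a b m * ((qcoord (U i j) m : ℝ) : ℂ) else 0 := by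
    intro ij'
    by_cases hij : (i, j) = ij'
    · rw [if_pos hij]
      subst hij
      refine Finset.sum_congr rfl fun m _ => ?_
      simp [Lc, qc]
    · rw [if_neg hij]
      refine Finset.sum_eq_zero fun m _ => ?_
      have : ¬(i = ij'.1 ∧ j = ij'.2) := by
        intro hc
        exact hij (Prod.ext hc.1 hc.2)
      simp [Lc, this]
  rw [Finset.sum_congr rfl fun ij' _ => step ij', Finset.sum_ite_eq Finset.univ (i, j)
    fun ij' => ∑ m, cc a b m * ((qcoord (U i j) m : ℝ) : ℂ), if_pos (Finset.mem_univ _)]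
  exact checkEntry a b (U i j)

noncomputable def genMat {n : ℕ} (z : QIdx n → ℂ) : Mat n :=
  Matrix.of fun p q => ∑ α, Lc (p, q) α * z α

def Umk {n : ℕ} (t : QIdx n → ℝ) : Matrix (Fin n) (Fin n) (Quaternion ℝ) :=
  Matrix.of fun i j => ⟨t ((i,j), 0), t ((i,j), 1), t ((i,j), 2), t ((i,j), 3)⟩

lemma qc_Umk {n : ℕ} (t : QIdx n → ℝ) : qc (Umk t) = t := by
  funext α
  obtain ⟨⟨i, j⟩, m⟩ := α
  fin_cases m <;> rfl

lemma genMat_real {n : ℕ} (t : QIdx n → ℝ) :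
    genMat (fun α => (t α : ℂ)) = checkMat (Umk t) := by
  ext p q
  show (∑ α, Lc (p, q) α * ((t α : ℝ) : ℂ)) = checkMat (Umk t) p q
  rw [show checkMat (Umk t) p q = checkMat (Umk t) ((p,q)).1 ((p,q)).2 from rfl,
    checkMat_coords, qc_Umk]

lemma genMat_decomp {n : ℕ} (g : Mat n) : ∃ z, genMat z = g := by
  set P := ((1:ℂ)/2) • (g + sigma g) with hP
  set Q := (-Complex.I/2) • (g - sigma g) with hQ
  have hPσ : sigma P = P := by
    rw [hP, sigma_smul, sigma_add, sigma_sigma, add_comm]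
    norm_num [Complex.conj_ofNat]
  have hQσ : sigma Q = Q := by
    rw [hQ, sigma_smul, sigma_sub, sigma_sigma]
    have hc : (starRingEnd ℂ) (-Complex.I/2) = Complex.I/2 := by
      simp [Complex.conj_I, Complex.conj_ofNat]
    rw [hc, ← neg_sub g (sigma g), smul_neg, ← neg_smul, neg_div]
  have hPc : checkMat (Xof P) = P := checkMat_Xof hPσ
  have hQc : checkMat (Xof Q) = Q := checkMat_Xof hQσ
  have hg : g = P + Complex.I • Q := by
    rw [hP, hQ, smul_smul]
    have hI : Complex.I * (-Complex.I/2) = 1/2 := by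
      linear_combination (-1/2 : ℂ) * Complex.I_mul_I
    rw [hI]
    module
  refine ⟨fun α => (qc (Xof P) α : ℂ) + Complex.I * (qc (Xof Q) α : ℂ), ?_⟩
  ext p q
  show (∑ α, Lc (p, q) α * ((qc (Xof P) α : ℂ) + Complex.I * (qc (Xof Q) α : ℂ))) = g p q
  have expand : (∑ α, Lc (p, q) α * ((qc (Xof P) α : ℂ) + Complex.I * (qc (Xof Q) α : ℂ)))
      = (∑ α, Lc (p, q) α * (qc (Xof P) α : ℂ))
        + Complex.I * (∑ α, Lc (p, q) α * (qc (Xof Q) α : ℂ)) := by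
    rw [Finset.mul_sum, ← Finset.sum_add_distrib]
    exact Finset.sum_congr rfl fun α _ => by ring
  rw [expand, ← checkMat_coords (Xof P) (p, q), ← checkMat_coords (Xof Q) (p, q), hPc, hQc, hg]
  simp [Matrix.add_apply, Matrix.smul_apply]

lemma vanish_all {n : ℕ} {S : MvPolynomial ((Fin n × Fin 2) × (Fin n × Fin 2)) ℂ}
    (h : ∀ U : Matrix (Fin n) (Fin n) (Quaternion ℝ),
      MvPolynomial.eval (fun e => checkMat U e.1 e.2) S = 0)
    (g : Mat n) : MvPolynomial.eval (fun e => g e.1 e.2) S = 0 := by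
  classical
  set sub : ((Fin n × Fin 2) × (Fin n × Fin 2)) → MvPolynomial (QIdx n) ℂ :=
    fun e => ∑ α, MvPolynomial.C (Lc e α) * MvPolynomial.X α with hsub
  set S' : MvPolynomial (QIdx n) ℂ := MvPolynomial.eval₂ MvPolynomial.C sub S with hS'
  have key : ∀ z : QIdx n → ℂ,
      MvPolynomial.eval z S' = MvPolynomial.eval (fun e => genMat z e.1 e.2) S := by
    intro z
    rw [hS', MvPolynomial.eval_eval₂]
    have hid : (MvPolynomial.eval z).comp (MvPolynomial.C) = RingHom.id ℂ :=
      RingHom.ext fun c => by simp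
    rw [hid, MvPolynomial.eval₂_id]
    have hfun : (fun s => MvPolynomial.eval z (sub s)) = fun e => genMat z e.1 e.2 := by
      funext e
      rw [hsub]
      simp only [map_sum, _root_.map_mul (MvPolynomial.eval _), MvPolynomial.eval_C,
        MvPolynomial.eval_X]
      rfl
    rw [hfun]
  have hr : ∀ t : QIdx n → ℝ, MvPolynomial.eval (fun α => (t α : ℂ)) S' = 0 := by
    intro t
    rw [key, show (fun e : (Fin n × Fin 2) × (Fin n × Fin 2) =>
        genMat (fun α => ((t α : ℝ) : ℂ)) e.1 e.2) = fun e => checkMat (Umk t) e.1 e.2 from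
      funext fun e => by rw [genMat_real]]
    exact h (Umk t)
  have hS'0 : S' = 0 := realVanish hr
  obtain ⟨z, hz⟩ := genMat_decomp g
  have := key z
  rw [hS'0, map_zero] at this
  rw [← hz]
  exact this.symm

noncomputable def dpoly (n : ℕ) : MvPolynomial ((Fin n × Fin 2) × (Fin n × Fin 2)) ℂ :=
  (Matrix.of fun p q => (MvPolynomial.X (p, q) :
    MvPolynomial ((Fin n × Fin 2) × (Fin n × Fin 2)) ℂ)).det

lemma eval_dpoly {n : ℕ} (gm : Mat n) :
    MvPolynomial.eval (fun e => gm e.1 e.2) (dpoly n) = gm.det := by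
  rw [dpoly, RingHom.map_det]
  congr 1
  ext p q
  simp [Matrix.map_apply]


end RhoJacAux

open RhoJacAux

/-- There is a unique rational representation `ρ_Jac : GL(2n,ℂ) → GL(Z_n)` with
`ρ_Jac(Ǔ) = ρ(U)`, i.e. `ρ_Jac(Ǔ)(W) = U W Ūᵀ`, for all `U ∈ GL(n,ℍ)`. -/
theorem exists_unique_rhoJac (n : ℕ) :
    ∃! ρ : (Matrix (Fin n × Fin 2) (Fin n × Fin 2) ℂ)ˣ →* (Module.End ℂ (Zn n))ˣ,
      IsRatRep n ρ ∧
      ∀ (U : Matrix (Fin n) (Fin n) (Quaternion ℝ)) (hU : IsUnit (checkMat U))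
        (w : Zn n),
        (((ρ hU.unit : Module.End ℂ (Zn n)) w : Matrix (Fin n × Fin 2) (Fin n × Fin 2) ℂ))
          = checkMat U * (w : Matrix (Fin n × Fin 2) (Fin n × Fin 2) ℂ) * (checkMat U)ᴴ := by
  classical
  refine ⟨rho n, ⟨?_, fun U hU w => rho_checkMat U hU w⟩, ?_⟩
  · exact isRatRep_rho n
  rintro ρ' ⟨hRat, hval⟩
  have hRat' : IsRatRep' n ρ' := hRat
  obtain ⟨k', P', hP'⟩ := hRat'
  obtain ⟨k, P, hP⟩ := isRatRep_rho n
  set B := Module.finBasis ℂ (Zn n) with hB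
  apply MonoidHom.ext
  intro g
  apply Units.ext
  have hTT : ∀ i j, LinearMap.toMatrix B B ((ρ' g : Module.End ℂ (Zn n))) i j
      = LinearMap.toMatrix B B ((rho n g : Module.End ℂ (Zn n))) i j := by
    intro i j
    set R := P' i j * (dpoly n) ^ k - P i j * (dpoly n) ^ k' with hR
    have hvanish : ∀ U : Matrix (Fin n) (Fin n) (Quaternion ℝ),
        MvPolynomial.eval (fun e => checkMat U e.1 e.2) (R * dpoly n) = 0 := by
      intro U
      rw [_root_.map_mul (MvPolynomial.eval _)]
      by_cases hU : IsUnit (checkMat U)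
      · have hunit : (hU.unit : Mat n) = checkMat U := hU.unit_spec
        have hsame : ρ' hU.unit = rho n hU.unit := by
          apply Units.ext
          apply LinearMap.ext
          intro w
          exact Subtype.ext ((hval U hU w).trans (rho_checkMat U hU w).symm)
        have heval : (fun e : (Fin n × Fin 2) × (Fin n × Fin 2) => checkMat U e.1 e.2)
            = fun e => (hU.unit : Mat n) e.1 e.2 := by
          funext e; rw [hunit]
        rw [heval, hR, map_sub, _root_.map_mul (MvPolynomial.eval _),
          _root_.map_mul (MvPolynomial.eval _), map_pow, map_pow,
          ← hP' hU.unit i j, ← hP hU.unit i j, eval_dpoly, hsame]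
        ring
      · have hd0 : (checkMat U).det = 0 := by
          by_contra hne
          exact hU ((Matrix.isUnit_iff_isUnit_det _).mpr (isUnit_iff_ne_zero.mpr hne))
        rw [eval_dpoly, hd0, mul_zero]
    have hall := vanish_all hvanish (g : Mat n)
    have hdne : ((g : Mat n)).det ≠ 0 :=
      ((Matrix.isUnit_iff_isUnit_det _).mp g.isUnit).ne_zero
    rw [_root_.map_mul (MvPolynomial.eval _), hR, map_sub,
      _root_.map_mul (MvPolynomial.eval _), _root_.map_mul (MvPolynomial.eval _),
      map_pow, map_pow, ← hP' g i j, ← hP g i j, eval_dpoly,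
      mul_eq_zero, sub_eq_zero] at hall
    rcases hall with hall | hall
    · have h2 : LinearMap.toMatrix B B ((ρ' g : Module.End ℂ (Zn n))) i j
          * ((g : Mat n).det) ^ (k' + k)
          = LinearMap.toMatrix B B ((rho n g : Module.End ℂ (Zn n))) i j
          * ((g : Mat n).det) ^ (k' + k) := by
        rw [pow_add, ← mul_assoc, hall]
        ring
      exact mul_right_cancel₀ (pow_ne_zero _ hdne) h2
    · exact absurd hall hdne
  have hmat : LinearMap.toMatrix B B ((ρ' g : Module.End ℂ (Zn n)))
      = LinearMap.toMatrix B B ((rho n g : Module.End ℂ (Zn n))) := by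
    ext i j; exact hTT i j
  exact (LinearMap.toMatrix B B).injective hmat
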